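/- Let ⟨M, ⋆, R, γ, η, ε⟩ be a right-monoidal category and define μ_M := (ε_R⋆M)∘γ_{R,R,M} : R⋆(R⋆M) → R⋆M. Then T = ⟨R⋆−, μ, η⟩ is a monad on M; that is, μ is natural and associative, μ_M∘(R⋆μ_M) = μ_M∘μ_{R⋆M}, and η is a two-sided unit, μ_N∘η_{R⋆N} = id_{R⋆N} and μ_N∘(R⋆η_N) = id_{R⋆N}. -/
import Mathlib


open CategoryTheory

universe v u

/-- A right-monoidal (skew-monoidal) category structure on a category `C`
with unit object `R`: a product `⋆`, a skew-associator `γ`, a unit `η` and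
a counit `ε`, none of which is assumed invertible, subject to the pentagon
and the four (co)unit axioms. -/
structure RightMonoidalStruct (C : Type u) [Category.{v} C] (R : C) where
  smp : C → C → C
  smpHom : ∀ {X X' Y Y' : C}, (X ⟶ X') → (Y ⟶ Y') → (smp X Y ⟶ smp X' Y')
  smpHom_id : ∀ (X Y : C), smpHom (𝟙 X) (𝟙 Y) = 𝟙 (smp X Y)
  smpHom_comp : ∀ {X X' X'' Y Y' Y'' : C} (f : X ⟶ X') (f' : X' ⟶ X'')
      (g : Y ⟶ Y') (g' : Y' ⟶ Y''),
      smpHom (f ≫ f') (g ≫ g') = smpHom f g ≫ smpHom f' g'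
  γ : ∀ (L M N : C), smp L (smp M N) ⟶ smp (smp L M) N
  η : ∀ (M : C), M ⟶ smp R M
  ε : ∀ (M : C), smp M R ⟶ M
  γ_natural : ∀ {L L' M M' N N' : C} (f : L ⟶ L') (g : M ⟶ M') (h : N ⟶ N'),
      smpHom f (smpHom g h) ≫ γ L' M' N' = γ L M N ≫ smpHom (smpHom f g) h
  η_natural : ∀ {M M' : C} (f : M ⟶ M'), f ≫ η M' = η M ≫ smpHom (𝟙 R) f
  ε_natural : ∀ {M M' : C} (f : M ⟶ M'), smpHom f (𝟙 R) ≫ ε M' = ε M ≫ f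
  pentagon : ∀ (K L M N : C),
      smpHom (𝟙 K) (γ L M N) ≫ γ K (smp L M) N ≫ smpHom (γ K L M) (𝟙 N)
        = γ K L (smp M N) ≫ γ (smp K L) M N
  unit_triangle : ∀ (M N : C), η (smp M N) ≫ γ R M N = smpHom (η M) (𝟙 N)
  counit_triangle : ∀ (M N : C), γ M N R ≫ ε (smp M N) = smpHom (𝟙 M) (ε N)
  mixed_triangle : ∀ (M N : C),
      smpHom (𝟙 M) (η N) ≫ γ M R N ≫ smpHom (ε M) (𝟙 N) = 𝟙 (smp M N)
  unit_counit : η R ≫ ε R = 𝟙 R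

variable {C : Type u} [Category.{v} C] {R : C}

/-- The multiplication `μ_M := (ε_R ⋆ M) ∘ γ_{R,R,M}` of the canonical monad
`T = R ⋆ -`. -/
def RightMonoidalStruct.μ (S : RightMonoidalStruct C R) (M : C) :
    S.smp R (S.smp R M) ⟶ S.smp R M :=
  S.γ R R M ≫ S.smpHom (S.ε R) (𝟙 M)

/-- Lemma 2.5(i) of Szlachányi, "Skew-monoidal categories and
bialgebroids".  For a right-monoidal category `⟨M, ⋆, R, γ, η, ε⟩`, setting
`μ_M := (ε_R ⋆ M) ∘ γ_{R,R,M}`, the triple `T = ⟨R ⋆ -, μ, η⟩` is a monad: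
`μ` is natural and associative, and `η` is a two-sided unit for it. -/
theorem canonical_monad (S : RightMonoidalStruct C R) :
    (∀ {M M' : C} (f : M ⟶ M'),
        S.smpHom (𝟙 R) (S.smpHom (𝟙 R) f) ≫ S.μ M' = S.μ M ≫ S.smpHom (𝟙 R) f) ∧
    (∀ M : C, S.smpHom (𝟙 R) (S.μ M) ≫ S.μ M = S.μ (S.smp R M) ≫ S.μ M) ∧
    (∀ N : C, S.η (S.smp R N) ≫ S.μ N = 𝟙 (S.smp R N)) ∧
    (∀ N : C, S.smpHom (𝟙 R) (S.η N) ≫ S.μ N = 𝟙 (S.smp R N)) := by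
  have hl : ∀ {X Y Y' Y'' : C} (g : Y ⟶ Y') (g' : Y' ⟶ Y''),
      S.smpHom (𝟙 X) (g ≫ g') = S.smpHom (𝟙 X) g ≫ S.smpHom (𝟙 X) g' := by
    intro X Y Y' Y'' g g'; rw [← S.smpHom_comp, Category.id_comp]
  have hr : ∀ {X X' X'' Y : C} (f : X ⟶ X') (f' : X' ⟶ X''),
      S.smpHom (f ≫ f') (𝟙 Y) = S.smpHom f (𝟙 Y) ≫ S.smpHom f' (𝟙 Y) := by
    intro X X' X'' Y f f'; rw [← S.smpHom_comp, Category.id_comp]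
  have key : S.γ R R R ≫ S.smpHom (S.ε R) (𝟙 R) ≫ S.ε R
      = S.smpHom (𝟙 R) (S.ε R) ≫ S.ε R := by
    rw [S.ε_natural (S.ε R), ← Category.assoc, S.counit_triangle]
  refine ⟨?_, ?_, ?_, ?_⟩
  · intro M M' f
    unfold RightMonoidalStruct.μ
    rw [← Category.assoc, S.γ_natural (𝟙 R) (𝟙 R) f]
    simp [← S.smpHom_comp, S.smpHom_id]
  · intro M
    unfold RightMonoidalStruct.μ
    calc S.smpHom (𝟙 R) (S.γ R R M ≫ S.smpHom (S.ε R) (𝟙 M))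
        ≫ S.γ R R M ≫ S.smpHom (S.ε R) (𝟙 M)
        = S.smpHom (𝟙 R) (S.γ R R M)
          ≫ (S.smpHom (𝟙 R) (S.smpHom (S.ε R) (𝟙 M)) ≫ S.γ R R M)
          ≫ S.smpHom (S.ε R) (𝟙 M) := by
          rw [hl]; simp
      _ = S.smpHom (𝟙 R) (S.γ R R M) ≫ S.γ R (S.smp R R) M
          ≫ S.smpHom (S.smpHom (𝟙 R) (S.ε R) ≫ S.ε R) (𝟙 M) := by
          rw [S.γ_natural (𝟙 R) (S.ε R) (𝟙 M), hr]; simp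
      _ = S.smpHom (𝟙 R) (S.γ R R M) ≫ S.γ R (S.smp R R) M
          ≫ S.smpHom (S.γ R R R ≫ S.smpHom (S.ε R) (𝟙 R) ≫ S.ε R) (𝟙 M) := by
          rw [key]
      _ = (S.smpHom (𝟙 R) (S.γ R R M) ≫ S.γ R (S.smp R R) M
          ≫ S.smpHom (S.γ R R R) (𝟙 M)) ≫ S.smpHom (S.smpHom (S.ε R) (𝟙 R)) (𝟙 M)
          ≫ S.smpHom (S.ε R) (𝟙 M) := by
          rw [hr, hr]; simp
      _ = (S.γ R R (S.smp R M) ≫ S.γ (S.smp R R) R M)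
          ≫ S.smpHom (S.smpHom (S.ε R) (𝟙 R)) (𝟙 M) ≫ S.smpHom (S.ε R) (𝟙 M) := by
          rw [S.pentagon]
      _ = S.γ R R (S.smp R M)
          ≫ (S.smpHom (S.ε R) (S.smpHom (𝟙 R) (𝟙 M)) ≫ S.γ R R M)
          ≫ S.smpHom (S.ε R) (𝟙 M) := by
          rw [S.γ_natural (S.ε R) (𝟙 R) (𝟙 M)]; simp
      _ = (S.γ R R (S.smp R M) ≫ S.smpHom (S.ε R) (𝟙 (S.smp R M)))
          ≫ S.γ R R M ≫ S.smpHom (S.ε R) (𝟙 M) := by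
          rw [S.smpHom_id]; simp
  · intro N
    unfold RightMonoidalStruct.μ
    rw [← Category.assoc, S.unit_triangle, ← S.smpHom_comp, S.unit_counit,
      Category.comp_id, S.smpHom_id]
  · intro N
    unfold RightMonoidalStruct.μ
    exact S.mixed_triangle R N
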